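/- In a Frobenius algebra A over a field of characteristic 0, the principal ideal ωA generated by the characteristic element ω equals the socle of A (the minimal essential ideal, equivalently the sum of all minimal ideals). -/

import Mathlib

open Module LinearMap
set_option linter.unusedSectionVars false
set_option linter.unusedVariables false

section Frob
variable {K A : Type*} [Field K] [CharZero K] [CommRing A] [Algebra K A]
    [FiniteDimensional K A] {f : A →ₗ[K] K}
    {ι : Type*} [Fintype ι] [DecidableEq ι]
    {e : Basis ι K A} {d : ι → A}

theorem frob_repr (hd : ∀ i j, f (e i * d j) = if i = j then 1 else 0)
    (x : A) (j : ι) : f (x * d j) = e.repr x j := by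
  conv_lhs => rw [← e.sum_repr x]
  rw [Finset.sum_mul, map_sum]
  simp [smul_mul_assoc, hd]

theorem frob_nondeg (hd : ∀ i j, f (e i * d j) = if i = j then 1 else 0)
    {x : A} (hx : ∀ y, f (x * y) = 0) : x = 0 := by
  have : e.repr x = 0 := by
    ext j
    rw [← frob_repr hd x j, hx]
    simp
  simpa using congrArg e.repr.symm this

theorem frob_trace (hd : ∀ i j, f (e i * d j) = if i = j then 1 else 0)
    (x : A) : trace K A (LinearMap.mul K A x) = f (x * ∑ i, e i * d i) := by
  rw [trace_eq_matrix_trace K e, Matrix.trace]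
  simp only [Matrix.diag, LinearMap.toMatrix_apply, LinearMap.mul_apply']
  rw [Finset.mul_sum, map_sum]
  congr 1
  ext i
  rw [← frob_repr hd (x * e i) i, mul_assoc]

theorem frob_nilp_omega (hd : ∀ i j, f (e i * d j) = if i = j then 1 else 0)
    {x : A} (hx : IsNilpotent x) : (∑ i, e i * d i) * x = 0 := by
  apply frob_nondeg hd
  intro y
  have h1 : IsNilpotent (LinearMap.mul K A (x * y)) :=
    IsNilpotent.map ((Commute.all x y).isNilpotent_mul_right hx) (Algebra.lmul K A)
  have h2 : trace K A (LinearMap.mul K A (x * y)) = 0 :=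
    (LinearMap.isNilpotent_trace_of_isNilpotent h1).eq_zero
  rw [frob_trace hd] at h2
  calc f ((∑ i, e i * d i) * x * y) = f (x * y * ∑ i, e i * d i) := by ring_nf
    _ = 0 := h2

theorem frob_notnilp_omega (hd : ∀ i j, f (e i * d j) = if i = j then 1 else 0)
    {x : A} (hx : ¬ IsNilpotent x) : (∑ i, e i * d i) * x ≠ 0 := by
  intro hω
  -- Fitting decomposition of multiplication by x
  set g : Module.End K A := LinearMap.mul K A x with hg
  obtain ⟨N, hN⟩ := Filter.eventually_atTop.mp g.eventually_isCompl_ker_pow_range_pow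
  set n := N + 1 with hn
  have hc : IsCompl (LinearMap.ker (g ^ n)) (LinearMap.range (g ^ n)) :=
    hN n (Nat.le_succ N)
  have hgn : ∀ (m : ℕ) (z : A), (g ^ m) z = x ^ m * z := by
    intro m
    induction m with
    | zero => intro z; simp
    | succ k ih =>
      intro z
      rw [pow_succ, Module.End.mul_apply, ih, hg, LinearMap.mul_apply', pow_succ]
      ring
  -- decompose 1
  obtain ⟨v, hv, u, hu, hvu⟩ : ∃ v ∈ LinearMap.ker (g ^ n), ∃ u ∈ LinearMap.range (g ^ n),
      v + u = (1 : A) := by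
    have := hc.codisjoint.eq_top
    have h1 : (1 : A) ∈ LinearMap.ker (g ^ n) ⊔ LinearMap.range (g ^ n) := by
      rw [this]; trivial
    exact Submodule.mem_sup.mp h1
  obtain ⟨c, hcu⟩ := hu
  have hxv : x ^ n * v = 0 := by
    have := hv
    rw [LinearMap.mem_ker, hgn n] at this
    exact this
  have huv : u * v = 0 := by
    have h1 : u * v ∈ LinearMap.ker (g ^ n) := by
      rw [LinearMap.mem_ker, hgn n]
      calc x ^ n * (u * v) = u * (x ^ n * v) := by ring
        _ = 0 := by rw [hxv, mul_zero]
    have h2 : u * v ∈ LinearMap.range (g ^ n) := by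
      refine ⟨c * v, ?_⟩
      rw [hgn n]
      rw [hgn n] at hcu
      calc x ^ n * (c * v) = (x ^ n * c) * v := by ring
        _ = u * v := by rw [hcu]
    have := hc.disjoint.le_bot ⟨h1, h2⟩
    simpa using this
  have hu2 : u * u = u := by
    have : u * (v + u) = u := by rw [hvu, mul_one]
    calc u * u = u * (v + u) - u * v := by ring
      _ = u - 0 := by rw [this, huv]
      _ = u := by ring
  have hune : u ≠ 0 := by
    intro h0
    apply hx
    have : (1 : A) = v := by rw [← hvu, h0, add_zero]
    exact ⟨n, by rw [← mul_one (x ^ n), this, hxv]⟩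
  -- u = x * (x^N * c)
  have hxu : x * (x ^ N * c) = u := by
    rw [← hcu, hgn n, hn, pow_succ]
    ring
  -- trace of multiplication by u is zero
  have htr0 : trace K A (LinearMap.mul K A u) = 0 := by
    rw [frob_trace hd, ← hxu]
    calc f (x * (x ^ N * c) * ∑ i, e i * d i) = f ((x ^ N * c) * ((∑ i, e i * d i) * x)) := by
          ring_nf
      _ = 0 := by rw [hω, mul_zero, map_zero]
  -- but multiplication by an idempotent is a projection with nonzero range
  have hproj : LinearMap.IsProj (LinearMap.range (LinearMap.mul K A u)) (LinearMap.mul K A u) := by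
    constructor
    · intro z; exact ⟨z, rfl⟩
    · rintro z ⟨w, rfl⟩
      simp only [LinearMap.mul_apply']
      calc u * (u * w) = (u * u) * w := by ring
        _ = u * w := by rw [hu2]
  have htr : trace K A (LinearMap.mul K A u)
      = (finrank K (LinearMap.range (LinearMap.mul K A u)) : K) := hproj.trace
  have hpos : 0 < finrank K (LinearMap.range (LinearMap.mul K A u)) := by
    have : u ∈ LinearMap.range (LinearMap.mul K A u) := ⟨1, by simp⟩
    have hne : LinearMap.range (LinearMap.mul K A u) ≠ ⊥ := by
      intro hb
      rw [hb] at this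
      exact hune (by simpa using this)
    exact Module.finrank_pos_iff.mpr (Submodule.nontrivial_iff_ne_bot.mpr hne)
  rw [htr] at htr0
  exact (Nat.cast_ne_zero.mpr hpos.ne') htr0

theorem frob_ann_finrank (hd : ∀ i j, f (e i * d j) = if i = j then 1 else 0)
    (I : Ideal A) :
    finrank K (I.restrictScalars K) + finrank K ((Submodule.annihilator I).restrictScalars K)
      = finrank K A := by
  classical
  set Φ : A →ₗ[K] Module.Dual K A := (LinearMap.mul K A).compr₂ f with hΦ
  have hΦapp : ∀ x y, Φ x y = f (x * y) := fun x y => rfl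
  have hinj : Function.Injective Φ := by
    rw [← LinearMap.ker_eq_bot, Submodule.eq_bot_iff]
    intro x hx
    rw [LinearMap.mem_ker] at hx
    refine frob_nondeg hd fun y => ?_
    rw [← hΦapp, hx]
    rfl
  have hsurj : Function.Surjective Φ :=
    (LinearMap.injective_iff_surjective_of_finrank_eq_finrank
      (Subspace.dual_finrank_eq (K := K) (V := A)).symm).mp hinj
  set ΦE : A ≃ₗ[K] Module.Dual K A := LinearEquiv.ofBijective Φ ⟨hinj, hsurj⟩ with hΦE
  have hmap : Submodule.map (ΦE : A →ₗ[K] Module.Dual K A)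
      ((Submodule.annihilator I).restrictScalars K)
      = (I.restrictScalars K).dualAnnihilator := by
    ext g
    constructor
    · rintro ⟨x, hx, rfl⟩
      rw [Submodule.mem_dualAnnihilator]
      intro y hy
      have hxy : x * y = 0 := Submodule.mem_annihilator.mp hx y hy
      show f (x * y) = 0
      rw [hxy, map_zero]
    · intro hg
      obtain ⟨x, rfl⟩ := hsurj g
      refine Submodule.mem_map.mpr ⟨x, ?_, rfl⟩
      rw [Submodule.restrictScalars_mem]
      rw [Submodule.mem_annihilator]
      intro y hy
      have : ∀ a : A, f ((x * y) * a) = 0 := by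
        intro a
        rw [mul_assoc]
        exact (Submodule.mem_dualAnnihilator _).mp hg (y * a) (Ideal.mul_mem_right a I hy)
      exact frob_nondeg hd this
  have h1 : finrank K ((Submodule.annihilator I).restrictScalars K)
      = finrank K ((I.restrictScalars K).dualAnnihilator) := by
    rw [← hmap]
    exact (LinearEquiv.finrank_map_eq ΦE _).symm
  have h2 : finrank K (A ⧸ (I.restrictScalars K))
      = finrank K ((I.restrictScalars K).dualAnnihilator) :=
    LinearEquiv.finrank_eq (Subspace.quotEquivAnnihilator _)
  have h3 := Submodule.finrank_quotient_add_finrank (I.restrictScalars K)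
  omega

theorem frob_ann_top : Submodule.annihilator (⊤ : Ideal A) = ⊥ := by
  rw [Submodule.eq_bot_iff]
  intro x hx
  have := Submodule.mem_annihilator.mp hx 1 trivial
  simpa using this

theorem ann_sup (I J : Ideal A) :
    Submodule.annihilator (I ⊔ J) = Submodule.annihilator I ⊓ Submodule.annihilator J := by
  ext x
  simp only [Submodule.mem_inf, Submodule.mem_annihilator]
  constructor
  · intro h
    exact ⟨fun y hy => h y (Submodule.mem_sup_left hy),
      fun y hy => h y (Submodule.mem_sup_right hy)⟩
  · rintro ⟨h1, h2⟩ y hy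
    obtain ⟨a, ha, b, hb, rfl⟩ := Submodule.mem_sup.mp hy
    rw [smul_add, h1 a ha, h2 b hb, add_zero]

theorem restrictScalars_sup (I J : Ideal A) :
    (I ⊔ J).restrictScalars K = (I.restrictScalars K : Submodule K A) ⊔ J.restrictScalars K := by
  refine le_antisymm ?_ (sup_le ?_ ?_)
  · intro x hx
    obtain ⟨a, ha, b, hb, rfl⟩ := Submodule.mem_sup.mp hx
    exact Submodule.add_mem _ (Submodule.mem_sup_left ha) (Submodule.mem_sup_right hb)
  · intro x hx; exact Submodule.mem_sup_left hx
  · intro x hx; exact Submodule.mem_sup_right hx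

theorem restrictScalars_inf (I J : Ideal A) :
    (I ⊓ J).restrictScalars K = (I.restrictScalars K : Submodule K A) ⊓ J.restrictScalars K := by
  ext x
  exact Iff.rfl

theorem frob_ann_inf (hd : ∀ i j, f (e i * d j) = if i = j then 1 else 0)
    (I J : Ideal A) :
    Submodule.annihilator (I ⊓ J) = Submodule.annihilator I ⊔ Submodule.annihilator J := by
  have hle : Submodule.annihilator I ⊔ Submodule.annihilator J
      ≤ Submodule.annihilator (I ⊓ J) :=
    sup_le (Submodule.annihilator_mono inf_le_left)
      (Submodule.annihilator_mono inf_le_right)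
  -- dimension count
  have hAI := frob_ann_finrank hd I
  have hAJ := frob_ann_finrank hd J
  have hAIJ := frob_ann_finrank hd (I ⊓ J)
  have hAIsJ := frob_ann_finrank hd (I ⊔ J)
  have hsi := Submodule.finrank_sup_add_finrank_inf_eq
    (I.restrictScalars K) (J.restrictScalars K)
  have hsa := Submodule.finrank_sup_add_finrank_inf_eq
    ((Submodule.annihilator I).restrictScalars K)
    ((Submodule.annihilator J).restrictScalars K)
  rw [← restrictScalars_sup, ← restrictScalars_inf] at hsi
  rw [← restrictScalars_sup, ← restrictScalars_inf, ← ann_sup] at hsa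
  have hAnnSup := frob_ann_finrank hd (I ⊔ J)
  -- conclude equality from inclusion and equal finrank
  have heq : finrank K (((Submodule.annihilator I ⊔ Submodule.annihilator J)
        : Ideal A).restrictScalars K)
      = finrank K ((Submodule.annihilator (I ⊓ J)).restrictScalars K) := by
    omega
  have hle' : ((Submodule.annihilator I ⊔ Submodule.annihilator J : Ideal A)).restrictScalars K
      ≤ (Submodule.annihilator (I ⊓ J)).restrictScalars K := fun x hx => hle hx
  have h := Submodule.eq_of_le_of_finrank_eq hle' heq
  exact (Submodule.restrictScalars_injective K A A h).symm

theorem ideal_restrict_eq_top {I : Ideal A} (h : I.restrictScalars K = ⊤) : I = ⊤ := by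
  rw [Ideal.eq_top_iff_one]
  have : (1 : A) ∈ I.restrictScalars K := by rw [h]; trivial
  exact this

theorem frob_ann_maximal_atom (hd : ∀ i j, f (e i * d j) = if i = j then 1 else 0)
    {m : Ideal A} (hm : m.IsMaximal) : IsAtom (Submodule.annihilator m) := by
  constructor
  · -- nontrivial
    intro hb
    have h := frob_ann_finrank hd m
    rw [hb, Submodule.restrictScalars_bot, finrank_bot, add_zero] at h
    exact hm.ne_top (ideal_restrict_eq_top (Submodule.eq_top_of_finrank_eq h))
  · intro b hblt
    by_contra hbne
    obtain ⟨x, hxb, hxne⟩ := Submodule.exists_mem_ne_zero_of_ne_bot hbne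
    have hxm : x ∈ Submodule.annihilator m := hblt.le hxb
    have h1 : m ≤ Submodule.annihilator (Ideal.span {x}) := by
      intro y hy
      rw [Submodule.mem_annihilator]
      intro z hz
      obtain ⟨a, rfl⟩ := Ideal.mem_span_singleton'.mp hz
      have hxy : x * y = 0 := Submodule.mem_annihilator.mp hxm y hy
      show y * (a * x) = 0
      calc y * (a * x) = a * (x * y) := by ring
        _ = 0 := by rw [hxy, mul_zero]
    have h2 : Submodule.annihilator (Ideal.span {x}) ≠ ⊤ := by
      intro ht
      apply hxne
      have h1x : (1 : A) ∈ Submodule.annihilator (Ideal.span {x}) := by rw [ht]; trivial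
      have := Submodule.mem_annihilator.mp h1x x (Ideal.mem_span_singleton_self x)
      simpa using this
    have h3 : m = Submodule.annihilator (Ideal.span {x}) := hm.eq_of_le h2 h1
    have d1 := frob_ann_finrank hd (Ideal.span {x})
    have d2 := frob_ann_finrank hd m
    rw [← h3] at d1
    -- so finrank (span x) = finrank (Ann m)
    have hsx : Ideal.span {x} ≤ b := Ideal.span_le.mpr (by simpa using hxb)
    have hmono1 : finrank K ((Ideal.span {x}).restrictScalars K)
        ≤ finrank K (b.restrictScalars K) :=
      Submodule.finrank_mono (fun z hz => hsx hz)
    have hmono2 : finrank K (b.restrictScalars K)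
        ≤ finrank K ((Submodule.annihilator m).restrictScalars K) :=
      Submodule.finrank_mono (fun z hz => hblt.le hz)
    have heq : finrank K (b.restrictScalars K)
        = finrank K ((Submodule.annihilator m).restrictScalars K) := by omega
    have hb_eq : b.restrictScalars K = (Submodule.annihilator m).restrictScalars K :=
      Submodule.eq_of_le_of_finrank_eq (fun z hz => hblt.le hz) heq
    exact hblt.ne (Submodule.restrictScalars_injective K A A hb_eq)

theorem sSup_atoms_le_ann (hd : ∀ i j, f (e i * d j) = if i = j then 1 else 0) :
    sSup {I : Ideal A | IsAtom I} ≤ Submodule.annihilator (nilradical A) := by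
  have hnoe : IsNoetherianRing A := isNoetherian_of_tower K inferInstance
  refine sSup_le fun I hI => ?_
  obtain ⟨k, hk⟩ := IsNoetherianRing.isNilpotent_nilradical A
  have hle : I * nilradical A ≤ I := Ideal.mul_le_left
  rcases eq_or_lt_of_le hle with hcase | hcase
  · exfalso
    apply hI.1
    have hj : ∀ j : ℕ, I = I * (nilradical A) ^ j := by
      intro j
      induction j with
      | zero => simp
      | succ k ih =>
        calc I = I * nilradical A := hcase.symm
          _ = (I * (nilradical A) ^ k) * nilradical A := by rw [← ih]
          _ = I * (nilradical A) ^ (k + 1) := by rw [mul_assoc, pow_succ]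
    have := hj k
    rw [hk] at this
    simpa using this
  · have hbot : I * nilradical A = ⊥ := hI.2 _ (lt_of_le_of_lt (le_refl _) hcase)
    intro x hx
    rw [Submodule.mem_annihilator]
    intro y hy
    have : x * y ∈ I * nilradical A := Ideal.mul_mem_mul hx hy
    rw [hbot] at this
    simpa using this

theorem ann_nilrad_le_sSup_atoms (hd : ∀ i j, f (e i * d j) = if i = j then 1 else 0) :
    Submodule.annihilator (nilradical A) ≤ sSup {I : Ideal A | IsAtom I} := by
  classical
  have hart : IsArtinianRing A := isArtinian_of_tower K inferInstance
  have hfin : {I : Ideal A | I.IsMaximal}.Finite := IsArtinianRing.setOfPred_isMaximal_finite A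
  have hnil : nilradical A = hfin.toFinset.inf _root_.id := by
    rw [nilradical_eq_sInf, Finset.inf_id_eq_sInf]
    congr 1
    ext J
    simp [IsArtinianRing.isPrime_iff_isMaximal]
  rw [hnil]
  have key : ∀ s : Finset (Ideal A), (∀ m ∈ s, m.IsMaximal) →
      Submodule.annihilator (s.inf _root_.id) ≤ sSup {I : Ideal A | IsAtom I} := by
    intro s
    induction s using Finset.induction_on with
    | empty =>
      intro _
      rw [Finset.inf_empty, frob_ann_top]
      exact bot_le
    | insert _ _ hnotmem ih =>
      rename_i a s
      intro hmax
      rw [Finset.inf_insert]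
      simp only [id_eq]
      rw [frob_ann_inf hd]
      refine sup_le ?_ (ih fun m hm => hmax m (Finset.mem_insert_of_mem hm))
      exact le_sSup (frob_ann_maximal_atom hd (hmax a (Finset.mem_insert_self a s)))
  exact key _ fun m hm => (hfin.mem_toFinset.mp hm)
theorem frob_span_eq_ann (hd : ∀ i j, f (e i * d j) = if i = j then 1 else 0) :
    Ideal.span {∑ i, e i * d i} = Submodule.annihilator (nilradical A) := by
  set ω := ∑ i, e i * d i with hω
  have hle : Ideal.span {ω} ≤ Submodule.annihilator (nilradical A) := by
    intro x hx
    obtain ⟨a, rfl⟩ := Ideal.mem_span_singleton'.mp hx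
    rw [Submodule.mem_annihilator]
    intro y hy
    have h0 : ω * y = 0 := frob_nilp_omega hd (mem_nilradical.mp hy)
    show (a * ω) * y = 0
    calc (a * ω) * y = a * (ω * y) := by ring
      _ = 0 := by rw [h0, mul_zero]
  have hker : LinearMap.ker (LinearMap.mul K A ω) = (nilradical A).restrictScalars K := by
    ext x
    rw [LinearMap.mem_ker, Submodule.restrictScalars_mem, mem_nilradical]
    constructor
    · intro h
      by_contra hn
      exact frob_notnilp_omega hd hn h
    · intro h
      exact frob_nilp_omega hd h
  have hrange : LinearMap.range (LinearMap.mul K A ω) = (Ideal.span {ω}).restrictScalars K := by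
    ext x
    rw [LinearMap.mem_range, Submodule.restrictScalars_mem, Ideal.mem_span_singleton']
    constructor
    · rintro ⟨a, rfl⟩
      exact ⟨a, (mul_comm a ω)⟩
    · rintro ⟨a, rfl⟩
      exact ⟨a, (mul_comm ω a)⟩
  have hrn := LinearMap.finrank_range_add_finrank_ker (LinearMap.mul K A ω)
  rw [hker, hrange] at hrn
  have hann := frob_ann_finrank hd (nilradical A)
  have heq : finrank K ((Ideal.span {ω}).restrictScalars K)
      = finrank K ((Submodule.annihilator (nilradical A)).restrictScalars K) := by omega
  exact Submodule.restrictScalars_injective K A A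
    (Submodule.eq_of_le_of_finrank_eq (fun z hz => hle hz) heq)

end Frob

/-- In a Frobenius algebra over a field of characteristic 0, the principal
ideal generated by the characteristic element `ω = Σ_i e_i * e_i^#` equals the socle of
`A`, i.e. the sum of all minimal (atomic) ideals of `A`. -/
theorem stmt5 (K A : Type*) [Field K] [CharZero K] [CommRing A] [Algebra K A]
    [FiniteDimensional K A] (f : A →ₗ[K] K)
    {ι : Type*} [Fintype ι] [DecidableEq ι]
    (e : Basis ι K A) (d : ι → A)
    (hd : ∀ i j, f (e i * d j) = if i = j then 1 else 0) :
    Ideal.span {∑ i, e i * d i} = sSup {I : Ideal A | IsAtom I} := by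
  rw [frob_span_eq_ann hd]
  exact le_antisymm (ann_nilrad_le_sSup_atoms hd) (sSup_atoms_le_ann hd)
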